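/- If C_F ⊆ F_q^{k×(n-k)} is an (F, M, d)_q Ferrers diagram rank-metric code, then the lifted code L(C_F) = {X ∈ G_q(n,k) : F(X) = A_F for some A ∈ C_F} is an (n, M, 2d, {k})_q constant dimension code. -/

import Mathlib

/-- The subspace distance `d_S(U,V) = dim(U+V) - dim(U∩V)`. -/
noncomputable def sdist {F : Type*} [Field F] {n : ℕ} (U V : Submodule F (Fin n → F)) : ℕ :=
  Module.finrank F ↥(U ⊔ V) - Module.finrank F ↥(U ⊓ V)

/-- Given a strictly increasing enumeration `e` of the `k` pivot columns and `c` of the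
`n-k` non-pivot columns of an identifying vector, `liftMat e c A` is the `k×n` RREF
generator matrix whose pivot columns form the identity pattern and whose non-pivot
columns carry the entries of `A`. -/
def liftMat {F : Type*} [Field F] {n k : ℕ} (e : Fin k → Fin n) (c : Fin (n - k) → Fin n)
    (A : Matrix (Fin k) (Fin (n - k)) F) : Matrix (Fin k) (Fin n) F :=
  fun i t => (if t = e i then 1 else 0) + ∑ j, if t = c j then A i j else 0

section aux
variable {F : Type*} [Field F] {n k : ℕ} (e : Fin k → Fin n) (c : Fin (n - k) → Fin n)

lemma liftMat_apply_e (he : Function.Injective e) (hec : ∀ i j, e i ≠ c j)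
    (A : Matrix (Fin k) (Fin (n - k)) F) (i i' : Fin k) :
    liftMat e c A i (e i') = if i' = i then 1 else 0 := by
  simp only [liftMat]
  rw [Finset.sum_eq_zero (fun j _ => by simp [hec i' j]), add_zero]
  by_cases h : i' = i
  · simp [h]
  · rw [if_neg (fun h' => h (he h')), if_neg h]

lemma liftMat_apply_c (hc : Function.Injective c) (hec : ∀ i j, e i ≠ c j)
    (A : Matrix (Fin k) (Fin (n - k)) F) (i : Fin k) (j : Fin (n - k)) :
    liftMat e c A i (c j) = A i j := by
  simp only [liftMat]
  rw [if_neg (fun h => hec i j h.symm), zero_add, Finset.sum_eq_single j]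
  · simp
  · intro j' _ hj'; rw [if_neg (fun h => hj' (hc h).symm)]
  · simp

lemma sum_smul_liftMat_apply_e (he : Function.Injective e) (hec : ∀ i j, e i ≠ c j)
    (A : Matrix (Fin k) (Fin (n - k)) F) (lam : Fin k → F) (i : Fin k) :
    (∑ i', lam i' • liftMat e c A i') (e i) = lam i := by
  simp only [Finset.sum_apply, Pi.smul_apply, smul_eq_mul,
    liftMat_apply_e e c he hec]
  rw [Finset.sum_eq_single i]
  · simp
  · intro b _ hb; rw [if_neg (Ne.symm hb), mul_zero]
  · simp

lemma liftMat_linearIndependent (he : Function.Injective e) (hec : ∀ i j, e i ≠ c j)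
    (A : Matrix (Fin k) (Fin (n - k)) F) :
    LinearIndependent F (liftMat e c A) := by
  apply Fintype.linearIndependent_iff.2
  intro lam hlam i
  have := congrFun hlam (e i)
  rwa [sum_smul_liftMat_apply_e e c he hec] at this

lemma mem_span_liftMat (he : Function.Injective e) (hec : ∀ i j, e i ≠ c j)
    (A : Matrix (Fin k) (Fin (n - k)) F) {x : Fin n → F}
    (hx : x ∈ Submodule.span F (Set.range (liftMat e c A))) :
    x = ∑ i, x (e i) • liftMat e c A i := by
  obtain ⟨lam, hlam⟩ := (Submodule.mem_span_range_iff_exists_fun F).1 hx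
  have : ∀ i, x (e i) = lam i := fun i => by
    rw [← hlam, sum_smul_liftMat_apply_e e c he hec]
  simp_rw [this]; exact hlam.symm

end aux

/-- Lifting a Ferrers diagram rank-metric code yields a constant dimension code
(Etzion–Silberstein). Fix an identifying vector of weight `k` and length `n`, given by a
strictly monotone enumeration `e` of its pivot positions and `c` of its non-pivot
positions (with disjoint ranges). Let `C ⊆ F_q^{k×(n-k)}` be an `(F, M, d)_q` FDRMC for
the corresponding Ferrers diagram, i.e. `A i j = 0` whenever column `c j` lies before the
pivot `e i` of row `i`, and distinct codewords have rank distance at least `d`. Then the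
lifted subspaces `rowspace(liftMat e c A)`, `A ∈ C`, are pairwise distinct `k`-dimensional
subspaces of `F_q^n` with pairwise subspace distance at least `2d`: an `(n, M, 2d, {k})_q`
constant dimension code. -/
theorem lifted_FDRMC_is_CDC {F : Type*} [Field F] [Fintype F] {n k d : ℕ}
    (e : Fin k → Fin n) (c : Fin (n - k) → Fin n)
    (he : StrictMono e) (hc : StrictMono c) (hec : ∀ i j, e i ≠ c j)
    (C : Finset (Matrix (Fin k) (Fin (n - k)) F))
    (hsupp : ∀ A ∈ C, ∀ i j, c j < e i → A i j = 0)
    (hdist : ∀ A ∈ C, ∀ B ∈ C, A ≠ B → d ≤ (A - B).rank) :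
    (∀ A ∈ C, Module.finrank F ↥(Submodule.span F (Set.range (liftMat e c A))) = k) ∧
    Set.InjOn (fun A : Matrix (Fin k) (Fin (n - k)) F =>
      Submodule.span F (Set.range (liftMat e c A))) ↑C ∧
    (∀ A ∈ C, ∀ B ∈ C, A ≠ B →
      2 * d ≤ sdist (Submodule.span F (Set.range (liftMat e c A)))
        (Submodule.span F (Set.range (liftMat e c B)))) := by
  have hei := he.injective
  have hci := hc.injective
  have hdim : ∀ A : Matrix (Fin k) (Fin (n - k)) F,
      Module.finrank F ↥(Submodule.span F (Set.range (liftMat e c A))) = k := by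
    intro A
    rw [finrank_span_eq_card (liftMat_linearIndependent e c hei hec A), Fintype.card_fin]
  refine ⟨fun A _ => hdim A, ?_, ?_⟩
  · -- injectivity
    intro A _ B _ hAB
    simp only at hAB
    funext i j
    have h1 : liftMat e c A i ∈ Submodule.span F (Set.range (liftMat e c B)) := by
      rw [← hAB]; exact Submodule.subset_span (Set.mem_range_self i)
    have h2 := mem_span_liftMat e c hei hec B h1
    have h3 : liftMat e c A i = liftMat e c B i := by
      rw [h2]
      simp_rw [liftMat_apply_e e c hei hec A]
      rw [Finset.sum_eq_single i]
      · simp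
      · intro b _ hb; rw [if_neg hb, zero_smul]
      · simp
    have := congrFun h3 (c j)
    rwa [liftMat_apply_c e c hci hec, liftMat_apply_c e c hci hec] at this
  · -- distance
    intro A hA B hB hAB
    set U := Submodule.span F (Set.range (liftMat e c A)) with hU
    set V := Submodule.span F (Set.range (liftMat e c B)) with hV
    set D := A - B with hD
    set φ : (Fin (n - k) → F) →ₗ[F] (Fin n → F) :=
      { toFun := fun x t => ∑ j, if t = c j then x j else 0
        map_add' := by
          intro x y; funext t
          simp only [Pi.add_apply]
          rw [← Finset.sum_add_distrib]
          apply Finset.sum_congr rfl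
          intro j _; by_cases h : t = c j <;> simp [h]
        map_smul' := by
          intro a x; funext t
          simp only [Pi.smul_apply, RingHom.id_apply, smul_eq_mul, Finset.mul_sum]
          apply Finset.sum_congr rfl
          intro j _; by_cases h : t = c j <;> simp [h] } with hφ
    have hφc : ∀ (x : Fin (n - k) → F) j, φ x (c j) = x j := by
      intro x j
      simp only [hφ, LinearMap.coe_mk, AddHom.coe_mk]
      rw [Finset.sum_eq_single j]
      · simp
      · intro j' _ hj'; rw [if_neg (fun h => hj' (hci h).symm)]
      · simp
    have hφe : ∀ (x : Fin (n - k) → F) i, φ x (e i) = 0 := by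
      intro x i
      simp only [hφ, LinearMap.coe_mk, AddHom.coe_mk]
      exact Finset.sum_eq_zero (fun j _ => by simp [hec i j])
    have hφinj : Function.Injective φ := by
      intro x y hxy
      funext j
      rw [← hφc x j, ← hφc y j, hxy]
    set W := Submodule.map φ (Submodule.span F (Set.range D)) with hW
    have hWspan : W = Submodule.span F (Set.range (fun i => φ (D i))) := by
      rw [hW, Submodule.map_span]; congr 1; exact (Set.range_comp _ _).symm
    have hφD : ∀ i, φ (D i) = liftMat e c A i - liftMat e c B i := by
      intro i; funext t
      simp only [hφ, LinearMap.coe_mk, AddHom.coe_mk, hD, Pi.sub_apply, liftMat,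
        Matrix.sub_apply]
      rw [add_sub_add_left_eq_sub, ← Finset.sum_sub_distrib]
      apply Finset.sum_congr rfl
      intro j _; by_cases h : t = c j <;> simp [h]
    have hUV : U ⊔ V = U ⊔ W := by
      apply le_antisymm
      · refine sup_le le_sup_left ?_
        rw [hV]
        refine Submodule.span_le.2 ?_
        rintro _ ⟨i, rfl⟩
        have : liftMat e c B i = liftMat e c A i - φ (D i) := by rw [hφD]; ring
        rw [this]
        exact sub_mem (Submodule.mem_sup_left (Submodule.subset_span (Set.mem_range_self i)))
          (Submodule.mem_sup_right (hWspan ▸ Submodule.subset_span (Set.mem_range_self i)))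
      · refine sup_le le_sup_left ?_
        rw [hWspan]
        refine Submodule.span_le.2 ?_
        rintro _ ⟨i, rfl⟩
        show φ (D i) ∈ _
        rw [hφD]
        exact sub_mem (Submodule.mem_sup_left (Submodule.subset_span (Set.mem_range_self i)))
          (Submodule.mem_sup_right (Submodule.subset_span (Set.mem_range_self i)))
    have hUW : U ⊓ W = ⊥ := by
      rw [Submodule.eq_bot_iff]
      rintro x ⟨hxU, hxW⟩
      obtain ⟨y, -, rfl⟩ := Submodule.mem_map.1 hxW
      have h0 : ∀ i, φ y (e i) = 0 := hφe y
      have := mem_span_liftMat e c hei hec A hxU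
      rw [this]
      simp_rw [h0]
      simp
    have hrkW : Module.finrank F ↥W = D.rank := by
      rw [Matrix.rank_eq_finrank_span_row, hW]
      exact (Submodule.equivMapOfInjective φ hφinj
        (Submodule.span F (Set.range D))).finrank_eq.symm
    have hsup : Module.finrank F ↥(U ⊔ V) = k + D.rank := by
      rw [hUV]
      have := Submodule.finrank_sup_add_finrank_inf_eq U W
      rw [hUW, finrank_bot, add_zero, hdim A, hrkW] at this
      exact this
    have hsum := Submodule.finrank_sup_add_finrank_inf_eq U V
    rw [hdim A, hdim B] at hsum
    have hd := hdist A hA B hB hAB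
    rw [← hD] at hd
    simp only [sdist]
    omega
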